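/- Let X(s,t) = (s sin θ(t) + α(t), -s cos θ(t) + β(t), s(β(t) sin θ(t) + α(t) cos θ(t)) + γ(t)) with α, β, γ, θ of class C². Writing δ(t) = α cos θ + β sin θ and ξ(t) = α sin θ - β cos θ, the cross product ∂ₛX × ∂ₜX vanishes at (s,t) if and only if both (s + ξ(t)) θ'(t) + δ'(t) = 0 and s δ'(t) + γ'(t) - δ(t)(ξ'(t) - δ(t) θ'(t)) = 0 hold. -/

import Mathlib

open Real

/-- Cross product on ℝ × ℝ × ℝ. -/
def cross3 (u v : ℝ × ℝ × ℝ) : ℝ × ℝ × ℝ :=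
  (u.2.1 * v.2.2 - u.2.2 * v.2.1, u.2.2 * v.1 - u.1 * v.2.2, u.1 * v.2.1 - u.2.1 * v.1)

/-- Theorem A (a): the cross product ∂ₛX × ∂ₜX vanishes at (s,t) iff both
(2.8a) and (2.8b) hold. -/
theorem crossProduct_vanishes_iff (α β γ θ : ℝ → ℝ)
    (hα : ContDiff ℝ 2 α) (hβ : ContDiff ℝ 2 β) (hγ : ContDiff ℝ 2 γ) (hθ : ContDiff ℝ 2 θ)
    (X : ℝ → ℝ → ℝ × ℝ × ℝ)
    (hX : ∀ s t, X s t =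
      (s * Real.sin (θ t) + α t, -s * Real.cos (θ t) + β t,
        s * (β t * Real.sin (θ t) + α t * Real.cos (θ t)) + γ t))
    (δ ξ : ℝ → ℝ)
    (hδ : ∀ t, δ t = α t * Real.cos (θ t) + β t * Real.sin (θ t))
    (hξ : ∀ t, ξ t = α t * Real.sin (θ t) - β t * Real.cos (θ t))
    (s t : ℝ) :
    cross3
      (deriv (fun s' => (X s' t).1) s, deriv (fun s' => (X s' t).2.1) s,
        deriv (fun s' => (X s' t).2.2) s)
      (deriv (fun t' => (X s t').1) t, deriv (fun t' => (X s t').2.1) t,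
        deriv (fun t' => (X s t').2.2) t) = (0, 0, 0)
    ↔ ((s + ξ t) * deriv θ t + deriv δ t = 0 ∧
        s * deriv δ t + deriv γ t - δ t * (deriv ξ t - δ t * deriv θ t) = 0) := by
  have one_le : (1 : WithTop ℕ∞) ≤ 2 := by norm_num
  have hαd : HasDerivAt α (deriv α t) t :=
    ((hα.differentiable (by norm_num)) t).hasDerivAt
  have hβd : HasDerivAt β (deriv β t) t :=
    ((hβ.differentiable (by norm_num)) t).hasDerivAt
  have hγd : HasDerivAt γ (deriv γ t) t :=
    ((hγ.differentiable (by norm_num)) t).hasDerivAt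
  have hθd : HasDerivAt θ (deriv θ t) t :=
    ((hθ.differentiable (by norm_num)) t).hasDerivAt
  have hsin : HasDerivAt (fun u => Real.sin (θ u)) (Real.cos (θ t) * deriv θ t) t :=
    (Real.hasDerivAt_sin (θ t)).comp t hθd
  have hcos : HasDerivAt (fun u => Real.cos (θ u)) (-Real.sin (θ t) * deriv θ t) t :=
    (Real.hasDerivAt_cos (θ t)).comp t hθd
  -- abbreviations
  set n := Real.sin (θ t) with hn
  set c := Real.cos (θ t) with hc
  set A := deriv α t with hA
  set B := deriv β t with hB
  set G := deriv γ t with hG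
  set T := deriv θ t with hT
  have hP : n ^ 2 + c ^ 2 = 1 := Real.sin_sq_add_cos_sq (θ t)
  -- s-derivatives
  have d1 : deriv (fun s' => (X s' t).1) s = n := by
    have : (fun s' => (X s' t).1) = fun s' => s' * n + α t := by
      funext s'; rw [hX]
    rw [this]
    have h : HasDerivAt (fun s' : ℝ => s' * n + α t) (1 * n) s :=
      ((hasDerivAt_id s).mul_const n).add_const (α t)
    rw [h.deriv]; ring
  have d2 : deriv (fun s' => (X s' t).2.1) s = -c := by
    have : (fun s' => (X s' t).2.1) = fun s' => -s' * c + β t := by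
      funext s'; rw [hX]
    rw [this]
    have h : HasDerivAt (fun s' : ℝ => -s' * c + β t) (-1 * c) s := by
      have := ((hasDerivAt_id s).neg.mul_const c).add_const (β t)
      simpa using this
    rw [h.deriv]; ring
  have d3 : deriv (fun s' => (X s' t).2.2) s = β t * n + α t * c := by
    have : (fun s' => (X s' t).2.2) = fun s' => s' * (β t * n + α t * c) + γ t := by
      funext s'; rw [hX]
    rw [this]
    have h : HasDerivAt (fun s' : ℝ => s' * (β t * n + α t * c) + γ t)
        (1 * (β t * n + α t * c)) s :=
      ((hasDerivAt_id s).mul_const _).add_const (γ t)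
    rw [h.deriv]; ring
  -- t-derivatives
  have e1 : deriv (fun t' => (X s t').1) t = s * (c * T) + A := by
    have : (fun t' => (X s t').1) = fun t' => s * Real.sin (θ t') + α t' := by
      funext t'; rw [hX]
    rw [this]
    exact ((hsin.const_mul s).add hαd).deriv
  have e2 : deriv (fun t' => (X s t').2.1) t = s * (n * T) + B := by
    have : (fun t' => (X s t').2.1) = fun t' => -s * Real.cos (θ t') + β t' := by
      funext t'; rw [hX]
    rw [this]
    have h := ((hcos.const_mul (-s)).add hβd).deriv
    exact h.trans (by ring)
  have e3 : deriv (fun t' => (X s t').2.2) t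
      = s * (A * c + B * n + (β t * c - α t * n) * T) + G := by
    have : (fun t' => (X s t').2.2) =
        fun t' => s * (β t' * Real.sin (θ t') + α t' * Real.cos (θ t')) + γ t' := by
      funext t'; rw [hX]
    rw [this]
    have h := ((((hβd.mul hsin).add (hαd.mul hcos)).const_mul s).add hγd).deriv
    exact h.trans (by ring)
  -- derivatives of δ and ξ
  have dδ : deriv δ t = A * c + B * n + (β t * c - α t * n) * T := by
    have hδf : δ = fun u => α u * Real.cos (θ u) + β u * Real.sin (θ u) := funext hδ
    rw [hδf]
    have h := ((hαd.mul hcos).add (hβd.mul hsin)).deriv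
    exact h.trans (by ring)
  have dξ : deriv ξ t = A * n - B * c + (α t * c + β t * n) * T := by
    have hξf : ξ = fun u => α u * Real.sin (θ u) - β u * Real.cos (θ u) := funext hξ
    rw [hξf]
    have h := ((hαd.mul hsin).sub (hβd.mul hcos)).deriv
    exact h.trans (by ring)
  rw [d1, d2, d3, e1, e2, e3, dδ, dξ, hδ t, hξ t]
  simp only [cross3, Prod.mk.injEq]
  set a := α t with ha
  set b := β t with hb
  constructor
  · rintro ⟨h1, h2, h3⟩
    constructor
    · linear_combination h3 - s * T * hP
    · linear_combination (-c) * h1 + (-n) * h2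
        + (-(s * (A * c + B * n + (b * c - a * n) * T) + G)) * hP
  · rintro ⟨hE1, hE2⟩
    refine ⟨?_, ?_, ?_⟩
    · linear_combination (-c) * hE2 + (-n * (a * c + b * n)) * hE1
        + (-(c * (s * (A * c + B * n + (b * c - a * n) * T) + G)
            + n * (a * c + b * n) * s * T
            + ((-c) * (s * (A * c + B * n + (b * c - a * n) * T) + G)
               - (b * n + a * c) * (s * (n * T) + B)))) * hP
    · linear_combination (-n) * hE2 + (c * (a * c + b * n)) * hE1
        + (c * (a * c + b * n) * s * T
            - n * (s * (A * c + B * n + (b * c - a * n) * T) + G)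
            - ((b * n + a * c) * (s * (c * T) + A)
               - n * (s * (A * c + B * n + (b * c - a * n) * T) + G))) * hP
    · linear_combination hE1 + s * T * hP
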